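/- There exists a probability density function f supported on [0,1] that is not symmetric around 1/2 (hence the resulting digits are not all Bernoulli(1/2)), yet for a random variable X with density f the first three binary digits B_1(X), B_2(X), B_3(X) are pairwise independent. -/

import Mathlib

open MeasureTheory ProbabilityTheory Set

/-- The `i`-th binary digit of `x ∈ [0,1]`: `B_i(x) = ⌊2^i x⌋ mod 2`. -/
noncomputable def binDigit (i : ℕ) (x : ℝ) : ℤ := ⌊(2:ℝ)^i * x⌋ % 2

/-! ### Auxiliary definitions -/

/-- The density: `1/2` on `[0,1/2)`, `3/2` on `[1/2,1)`, `0` elsewhere. -/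
noncomputable def fAux : ℝ → ℝ := fun x =>
  if x ∈ Ico (0:ℝ) (1/2) then 1/2 else if x ∈ Ico (1/2:ℝ) 1 then 3/2 else 0

/-- The set where the `n`-th digit is `1`. -/
def dSet (n : ℕ) : Set ℝ := {x | binDigit n x = 1}

lemma measurable_binDigit (n : ℕ) : Measurable (binDigit n) :=
  (measurable_from_top (f := fun k : ℤ => k % 2)).comp
    ((measurable_const_mul ((2:ℝ)^n)).floor)

lemma measurableSet_dSet (n : ℕ) : MeasurableSet (dSet n) :=
  (measurable_binDigit n) (measurableSet_singleton 1)

lemma binDigit_mem (n : ℕ) (x : ℝ) : binDigit n x = 0 ∨ binDigit n x = 1 :=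
  Int.emod_two_eq_zero_or_one _

lemma bd_eq (n : ℕ) (k : ℤ) (x : ℝ) (h1 : (k:ℝ) ≤ 2^n * x) (h2 : 2^n * x < (k:ℝ)+1) :
    binDigit n x = k % 2 := by
  unfold binDigit
  have : ⌊(2:ℝ)^n * x⌋ = k := Int.floor_eq_iff.mpr ⟨h1, by push_cast; linarith⟩
  rw [this]

lemma mem_dSet_iff (n : ℕ) (x : ℝ) : x ∈ dSet n ↔ ⌊(2:ℝ)^n * x⌋ % 2 = 1 := Iff.rfl

/-! ### Set computations -/

lemma L1 : Ico (0:ℝ) (1/2) ∩ dSet 1 = ∅ := by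
  ext x
  simp only [mem_inter_iff, mem_Ico, mem_empty_iff_false, iff_false, not_and, dSet, mem_setOf_eq]
  rintro ⟨h0, h1⟩
  have := bd_eq 1 0 x (by norm_num; linarith) (by norm_num; linarith)
  simp [this]

lemma L2 : Ico (1/2:ℝ) 1 ∩ dSet 1 = Ico (1/2:ℝ) 1 := by
  apply inter_eq_left.mpr
  rintro x ⟨h0, h1⟩
  have := bd_eq 1 1 x (by norm_num; linarith) (by norm_num; linarith)
  simpa [dSet] using this

lemma L3 : Ico (0:ℝ) (1/2) ∩ dSet 2 = Ico (1/4:ℝ) (1/2) := by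
  ext x
  simp only [mem_inter_iff, mem_Ico, dSet, mem_setOf_eq]
  constructor
  · rintro ⟨⟨h0, h1⟩, hd⟩
    unfold binDigit at hd
    have hlo : (0:ℤ) ≤ ⌊(2:ℝ)^2 * x⌋ := Int.le_floor.mpr (by push_cast; nlinarith)
    have hhi : ⌊(2:ℝ)^2 * x⌋ < 2 := Int.floor_lt.mpr (by push_cast; nlinarith)
    have hk : ⌊(2:ℝ)^2 * x⌋ = 1 := by omega
    obtain ⟨ha, hb⟩ := Int.floor_eq_iff.mp hk
    norm_num at ha hb
    constructor <;> linarith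
  · rintro ⟨h0, h1⟩
    refine ⟨⟨by linarith, h1⟩, ?_⟩
    have := bd_eq 2 1 x (by norm_num; linarith) (by norm_num; linarith)
    simpa using this

lemma L4 : Ico (1/2:ℝ) 1 ∩ dSet 2 = Ico (3/4:ℝ) 1 := by
  ext x
  simp only [mem_inter_iff, mem_Ico, dSet, mem_setOf_eq]
  constructor
  · rintro ⟨⟨h0, h1⟩, hd⟩
    unfold binDigit at hd
    have hlo : (2:ℤ) ≤ ⌊(2:ℝ)^2 * x⌋ := Int.le_floor.mpr (by push_cast; nlinarith)
    have hhi : ⌊(2:ℝ)^2 * x⌋ < 4 := Int.floor_lt.mpr (by push_cast; nlinarith)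
    have hk : ⌊(2:ℝ)^2 * x⌋ = 3 := by omega
    obtain ⟨ha, hb⟩ := Int.floor_eq_iff.mp hk
    norm_num at ha hb
    constructor <;> linarith
  · rintro ⟨h0, h1⟩
    refine ⟨⟨by linarith, h1⟩, ?_⟩
    have := bd_eq 2 3 x (by norm_num; linarith) (by norm_num; linarith)
    simpa using this

lemma L5 : Ico (0:ℝ) (1/2) ∩ dSet 3 = Ico (1/8:ℝ) (1/4) ∪ Ico (3/8:ℝ) (1/2) := by
  ext x
  simp only [mem_inter_iff, mem_Ico, dSet, mem_setOf_eq, mem_union]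
  constructor
  · rintro ⟨⟨h0, h1⟩, hd⟩
    unfold binDigit at hd
    have hlo : (0:ℤ) ≤ ⌊(2:ℝ)^3 * x⌋ := Int.le_floor.mpr (by push_cast; nlinarith)
    have hhi : ⌊(2:ℝ)^3 * x⌋ < 4 := Int.floor_lt.mpr (by push_cast; nlinarith)
    have hk : ⌊(2:ℝ)^3 * x⌋ = 1 ∨ ⌊(2:ℝ)^3 * x⌋ = 3 := by omega
    rcases hk with hk | hk <;> obtain ⟨ha, hb⟩ := Int.floor_eq_iff.mp hk <;>
      norm_num at ha hb
    · exact Or.inl ⟨by linarith, by linarith⟩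
    · exact Or.inr ⟨by linarith, by linarith⟩
  · rintro (⟨h0, h1⟩ | ⟨h0, h1⟩)
    · refine ⟨⟨by linarith, by linarith⟩, ?_⟩
      have := bd_eq 3 1 x (by norm_num; linarith) (by norm_num; linarith)
      simpa using this
    · refine ⟨⟨by linarith, h1⟩, ?_⟩
      have := bd_eq 3 3 x (by norm_num; linarith) (by norm_num; linarith)
      simpa using this

lemma L6 : Ico (1/2:ℝ) 1 ∩ dSet 3 = Ico (5/8:ℝ) (3/4) ∪ Ico (7/8:ℝ) 1 := by
  ext x
  simp only [mem_inter_iff, mem_Ico, dSet, mem_setOf_eq, mem_union]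
  constructor
  · rintro ⟨⟨h0, h1⟩, hd⟩
    unfold binDigit at hd
    have hlo : (4:ℤ) ≤ ⌊(2:ℝ)^3 * x⌋ := Int.le_floor.mpr (by push_cast; nlinarith)
    have hhi : ⌊(2:ℝ)^3 * x⌋ < 8 := Int.floor_lt.mpr (by push_cast; nlinarith)
    have hk : ⌊(2:ℝ)^3 * x⌋ = 5 ∨ ⌊(2:ℝ)^3 * x⌋ = 7 := by omega
    rcases hk with hk | hk <;> obtain ⟨ha, hb⟩ := Int.floor_eq_iff.mp hk <;>
      norm_num at ha hb
    · exact Or.inl ⟨by linarith, by linarith⟩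
    · exact Or.inr ⟨by linarith, by linarith⟩
  · rintro (⟨h0, h1⟩ | ⟨h0, h1⟩)
    · refine ⟨⟨by linarith, by linarith⟩, ?_⟩
      have := bd_eq 3 5 x (by norm_num; linarith) (by norm_num; linarith)
      simpa using this
    · refine ⟨⟨by linarith, h1⟩, ?_⟩
      have := bd_eq 3 7 x (by norm_num; linarith) (by norm_num; linarith)
      simpa using this

lemma L7 : Ico (1/4:ℝ) (1/2) ∩ dSet 3 = Ico (3/8:ℝ) (1/2) := by
  ext x
  simp only [mem_inter_iff, mem_Ico, dSet, mem_setOf_eq]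
  constructor
  · rintro ⟨⟨h0, h1⟩, hd⟩
    unfold binDigit at hd
    have hlo : (2:ℤ) ≤ ⌊(2:ℝ)^3 * x⌋ := Int.le_floor.mpr (by push_cast; nlinarith)
    have hhi : ⌊(2:ℝ)^3 * x⌋ < 4 := Int.floor_lt.mpr (by push_cast; nlinarith)
    have hk : ⌊(2:ℝ)^3 * x⌋ = 3 := by omega
    obtain ⟨ha, hb⟩ := Int.floor_eq_iff.mp hk
    norm_num at ha hb
    constructor <;> linarith
  · rintro ⟨h0, h1⟩
    refine ⟨⟨by linarith, h1⟩, ?_⟩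
    have := bd_eq 3 3 x (by norm_num; linarith) (by norm_num; linarith)
    simpa using this

lemma L8 : Ico (3/4:ℝ) 1 ∩ dSet 3 = Ico (7/8:ℝ) 1 := by
  ext x
  simp only [mem_inter_iff, mem_Ico, dSet, mem_setOf_eq]
  constructor
  · rintro ⟨⟨h0, h1⟩, hd⟩
    unfold binDigit at hd
    have hlo : (6:ℤ) ≤ ⌊(2:ℝ)^3 * x⌋ := Int.le_floor.mpr (by push_cast; nlinarith)
    have hhi : ⌊(2:ℝ)^3 * x⌋ < 8 := Int.floor_lt.mpr (by push_cast; nlinarith)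
    have hk : ⌊(2:ℝ)^3 * x⌋ = 7 := by omega
    obtain ⟨ha, hb⟩ := Int.floor_eq_iff.mp hk
    norm_num at ha hb
    constructor <;> linarith
  · rintro ⟨h0, h1⟩
    refine ⟨⟨by linarith, h1⟩, ?_⟩
    have := bd_eq 3 7 x (by norm_num; linarith) (by norm_num; linarith)
    simpa using this

/-! ### Measure computations -/

lemma g_rep : (fun x => ENNReal.ofReal (fAux x)) =
    fun x => (Ico (0:ℝ) (1/2)).indicator (fun _ => ENNReal.ofReal (1/2)) x
      + (Ico (1/2:ℝ) 1).indicator (fun _ => ENNReal.ofReal (3/2)) x := by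
  funext x
  unfold fAux
  by_cases h1 : x ∈ Ico (0:ℝ) (1/2)
  · have h2 : x ∉ Ico (1/2:ℝ) 1 := fun h => absurd h.1 (not_le.mpr h1.2)
    rw [if_pos h1, indicator_of_mem h1, indicator_of_notMem h2, add_zero]
  · rw [if_neg h1, indicator_of_notMem h1, zero_add]
    by_cases h2 : x ∈ Ico (1/2:ℝ) 1
    · rw [if_pos h2, indicator_of_mem h2]
    · rw [if_neg h2, indicator_of_notMem h2, ENNReal.ofReal_zero]

lemma mu_apply (S : Set ℝ) (hS : MeasurableSet S) :
    (volume.withDensity fun x => ENNReal.ofReal (fAux x)) S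
      = ENNReal.ofReal (1/2) * volume (Ico (0:ℝ) (1/2) ∩ S)
        + ENNReal.ofReal (3/2) * volume (Ico (1/2:ℝ) 1 ∩ S) := by
  rw [withDensity_apply _ hS, g_rep]
  rw [lintegral_add_left (measurable_const.indicator measurableSet_Ico)]
  rw [lintegral_indicator_const measurableSet_Ico, lintegral_indicator_const measurableSet_Ico]
  rw [Measure.restrict_apply measurableSet_Ico, Measure.restrict_apply measurableSet_Ico]

lemma mu_S1 : (volume.withDensity fun x => ENNReal.ofReal (fAux x)) (dSet 1)
    = ENNReal.ofReal (3/4) := by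
  rw [mu_apply _ (measurableSet_dSet 1), L1, L2]
  simp only [measure_empty, mul_zero, zero_add, Real.volume_Ico]
  rw [← ENNReal.ofReal_mul (by norm_num)]
  norm_num

lemma mu_S2 : (volume.withDensity fun x => ENNReal.ofReal (fAux x)) (dSet 2)
    = ENNReal.ofReal (1/2) := by
  rw [mu_apply _ (measurableSet_dSet 2), L3, L4]
  rw [Real.volume_Ico, Real.volume_Ico, ← ENNReal.ofReal_mul (by norm_num),
    ← ENNReal.ofReal_mul (by norm_num), ← ENNReal.ofReal_add (by norm_num) (by norm_num)]
  norm_num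

lemma vol_L5 : volume (Ico (1/8:ℝ) (1/4) ∪ Ico (3/8:ℝ) (1/2)) = ENNReal.ofReal (1/4) := by
  rw [measure_union (by rw [Set.Ico_disjoint_Ico]; norm_num) measurableSet_Ico,
    Real.volume_Ico, Real.volume_Ico, ← ENNReal.ofReal_add (by norm_num) (by norm_num)]
  norm_num

lemma vol_L6 : volume (Ico (5/8:ℝ) (3/4) ∪ Ico (7/8:ℝ) 1) = ENNReal.ofReal (1/4) := by
  rw [measure_union (by rw [Set.Ico_disjoint_Ico]; norm_num) measurableSet_Ico,
    Real.volume_Ico, Real.volume_Ico, ← ENNReal.ofReal_add (by norm_num) (by norm_num)]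
  norm_num

lemma mu_S3 : (volume.withDensity fun x => ENNReal.ofReal (fAux x)) (dSet 3)
    = ENNReal.ofReal (1/2) := by
  rw [mu_apply _ (measurableSet_dSet 3), L5, L6, vol_L5, vol_L6,
    ← ENNReal.ofReal_mul (by norm_num), ← ENNReal.ofReal_mul (by norm_num),
    ← ENNReal.ofReal_add (by norm_num) (by norm_num)]
  norm_num

lemma mu_S12 : (volume.withDensity fun x => ENNReal.ofReal (fAux x)) (dSet 1 ∩ dSet 2)
    = ENNReal.ofReal (3/8) := by
  rw [mu_apply _ ((measurableSet_dSet 1).inter (measurableSet_dSet 2)),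
    ← inter_assoc, ← inter_assoc, L1, L2, L4]
  simp only [empty_inter, measure_empty, mul_zero, zero_add, Real.volume_Ico]
  rw [← ENNReal.ofReal_mul (by norm_num)]
  norm_num

lemma mu_S13 : (volume.withDensity fun x => ENNReal.ofReal (fAux x)) (dSet 1 ∩ dSet 3)
    = ENNReal.ofReal (3/8) := by
  rw [mu_apply _ ((measurableSet_dSet 1).inter (measurableSet_dSet 3)),
    ← inter_assoc, ← inter_assoc, L1, L2, L6, vol_L6]
  simp only [empty_inter, measure_empty, mul_zero, zero_add]
  rw [← ENNReal.ofReal_mul (by norm_num)]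
  norm_num

lemma mu_S23 : (volume.withDensity fun x => ENNReal.ofReal (fAux x)) (dSet 2 ∩ dSet 3)
    = ENNReal.ofReal (1/4) := by
  rw [mu_apply _ ((measurableSet_dSet 2).inter (measurableSet_dSet 3)),
    ← inter_assoc, ← inter_assoc, L3, L4, L7, L8,
    Real.volume_Ico, Real.volume_Ico, ← ENNReal.ofReal_mul (by norm_num),
    ← ENNReal.ofReal_mul (by norm_num), ← ENNReal.ofReal_add (by norm_num) (by norm_num)]
  norm_num

/-! ### From independent sets to independent indicator functions -/

lemma indepFun_indicator_of_indepSet {Ω : Type*} {mΩ : MeasurableSpace Ω} {μ : Measure Ω}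
    {A B : Set Ω} (h : IndepSet A B μ) :
    IndepFun (A.indicator fun _ => (1:ℤ)) (B.indicator fun _ => (1:ℤ)) μ := by
  rw [IndepFun_iff_Indep]
  rw [IndepSet_iff_Indep] at h
  have hA : Measurable[MeasurableSpace.generateFrom {A}] (A.indicator fun _ => (1:ℤ)) :=
    measurable_const.indicator (MeasurableSpace.measurableSet_generateFrom (mem_singleton _))
  have hB : Measurable[MeasurableSpace.generateFrom {B}] (B.indicator fun _ => (1:ℤ)) :=
    measurable_const.indicator (MeasurableSpace.measurableSet_generateFrom (mem_singleton _))
  exact indep_of_indep_of_le_right (indep_of_indep_of_le_left h hA.comap_le) hB.comap_le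

/-- There is a probability density `f` supported on `[0,1]` that is not symmetric around
`1/2` (hence the resulting digits are not all Bernoulli(1/2)), yet for any random variable
`X` with density `f` the first three binary digits are pairwise independent. -/
theorem exists_nonsymmetric_density_with_pairwise_indep_digits :
    ∃ f : ℝ → ℝ,
      (∀ x, 0 ≤ f x) ∧
      (∀ x, x ∉ Set.Icc (0:ℝ) 1 → f x = 0) ∧
      (∫ x, f x = 1) ∧
      ¬ (∀ ε ∈ Set.Icc (0:ℝ) (1/2), f (1/2 - ε) = f (1/2 + ε)) ∧
      ∀ (Ω : Type) (_ : MeasureSpace Ω) (_ : IsProbabilityMeasure (ℙ : Measure Ω))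
        (X : Ω → ℝ), Measurable X →
        Measure.map X ℙ = volume.withDensity (fun x => ENNReal.ofReal (f x)) →
        (∃ n : ℕ, 1 ≤ n ∧ ℙ {ω | binDigit n (X ω) = 1} ≠ 1/2) ∧
        IndepFun (fun ω => binDigit 1 (X ω)) (fun ω => binDigit 2 (X ω)) ℙ ∧
        IndepFun (fun ω => binDigit 1 (X ω)) (fun ω => binDigit 3 (X ω)) ℙ ∧
        IndepFun (fun ω => binDigit 2 (X ω)) (fun ω => binDigit 3 (X ω)) ℙ := by
  refine ⟨fAux, ?_, ?_, ?_, ?_, ?_⟩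
  · intro x
    unfold fAux
    split_ifs <;> norm_num
  · intro x hx
    simp only [mem_Icc, not_and_or, not_le] at hx
    unfold fAux
    split_ifs with h1 h2
    · rcases hx with hx | hx <;> [exact absurd h1.1 (by linarith); linarith [h1.2]]
    · rcases hx with hx | hx <;> [exact absurd h2.1 (by linarith); linarith [h2.2]]
    · rfl
  · have hrep : fAux = fun x => (Ico (0:ℝ) (1/2)).indicator (fun _ => (1/2:ℝ)) x
        + (Ico (1/2:ℝ) 1).indicator (fun _ => (3/2:ℝ)) x := by
      funext x
      unfold fAux
      by_cases h1 : x ∈ Ico (0:ℝ) (1/2)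
      · have h2 : x ∉ Ico (1/2:ℝ) 1 := fun h => absurd h.1 (not_le.mpr h1.2)
        rw [if_pos h1, indicator_of_mem h1, indicator_of_notMem h2, add_zero]
      · rw [if_neg h1, indicator_of_notMem h1, zero_add]
        by_cases h2 : x ∈ Ico (1/2:ℝ) 1
        · rw [if_pos h2, indicator_of_mem h2]
        · rw [if_neg h2, indicator_of_notMem h2]
    rw [hrep]
    have i1 : Integrable ((Ico (0:ℝ) (1/2)).indicator (fun _ => (1/2:ℝ))) :=
      (integrable_indicator_iff measurableSet_Ico).mpr
        (integrableOn_const (by rw [Real.volume_Ico]; exact ENNReal.ofReal_ne_top))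
    have i2 : Integrable ((Ico (1/2:ℝ) 1).indicator (fun _ => (3/2:ℝ))) :=
      (integrable_indicator_iff measurableSet_Ico).mpr
        (integrableOn_const (by rw [Real.volume_Ico]; exact ENNReal.ofReal_ne_top))
    rw [integral_add i1 i2, integral_indicator measurableSet_Ico,
      integral_indicator measurableSet_Ico, setIntegral_const, setIntegral_const,
      Real.volume_real_Ico, Real.volume_real_Ico]
    norm_num
  · intro h
    have h1 := h (1/4) (by norm_num)
    norm_num [fAux, mem_Ico] at h1
  · intro Ω _ hP X hX hmap
    have hpre : ∀ n : ℕ, ℙ {ω | binDigit n (X ω) = 1}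
        = (volume.withDensity fun x => ENNReal.ofReal (fAux x)) (dSet n) := by
      intro n
      have : {ω | binDigit n (X ω) = 1} = X ⁻¹' dSet n := rfl
      rw [this, ← hmap, ← Measure.map_apply hX (measurableSet_dSet n)]
    have hpre2 : ∀ n m : ℕ, ℙ (X ⁻¹' dSet n ∩ X ⁻¹' dSet m)
        = (volume.withDensity fun x => ENNReal.ofReal (fAux x)) (dSet n ∩ dSet m) := by
      intro n m
      rw [← preimage_inter, ← hmap,
        ← Measure.map_apply hX ((measurableSet_dSet n).inter (measurableSet_dSet m))]
    -- helper to convert IndepSet to the desired IndepFun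
    have key : ∀ n m : ℕ,
        (volume.withDensity fun x => ENNReal.ofReal (fAux x)) (dSet n ∩ dSet m)
          = (volume.withDensity fun x => ENNReal.ofReal (fAux x)) (dSet n)
            * (volume.withDensity fun x => ENNReal.ofReal (fAux x)) (dSet m) →
        IndepFun (fun ω => binDigit n (X ω)) (fun ω => binDigit m (X ω)) ℙ := by
      intro n m hmul
      have hA : MeasurableSet (X ⁻¹' dSet n) := hX (measurableSet_dSet n)
      have hB : MeasurableSet (X ⁻¹' dSet m) := hX (measurableSet_dSet m)
      have hindep : IndepSet (X ⁻¹' dSet n) (X ⁻¹' dSet m) ℙ := by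
        refine (indepSet_iff_measure_inter_eq_mul hA hB ℙ).mpr ?_
        rw [hpre2 n m, hmul, ← hpre n, ← hpre m]
        rfl
      have := indepFun_indicator_of_indepSet hindep
      have e1 : (X ⁻¹' dSet n).indicator (fun _ => (1:ℤ)) = fun ω => binDigit n (X ω) := by
        funext ω
        by_cases h : ω ∈ X ⁻¹' dSet n
        · simp [indicator_of_mem h]
          exact (h : binDigit n (X ω) = 1).symm
        · simp [indicator_of_notMem h]
          rcases binDigit_mem n (X ω) with h0 | h1
          · exact h0.symm
          · exact absurd h1 h
      have e2 : (X ⁻¹' dSet m).indicator (fun _ => (1:ℤ)) = fun ω => binDigit m (X ω) := by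
        funext ω
        by_cases h : ω ∈ X ⁻¹' dSet m
        · simp [indicator_of_mem h]
          exact (h : binDigit m (X ω) = 1).symm
        · simp [indicator_of_notMem h]
          rcases binDigit_mem m (X ω) with h0 | h1
          · exact h0.symm
          · exact absurd h1 h
      rwa [e1, e2] at this
    refine ⟨⟨1, le_refl 1, ?_⟩, ?_, ?_, ?_⟩
    · rw [hpre 1, mu_S1]
      intro hc
      have := congrArg ENNReal.toReal hc
      rw [ENNReal.toReal_ofReal (by norm_num)] at this
      simp [ENNReal.toReal_div] at this
      norm_num at this
    · exact key 1 2 (by rw [mu_S12, mu_S1, mu_S2, ← ENNReal.ofReal_mul (by norm_num)]; norm_num)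
    · exact key 1 3 (by rw [mu_S13, mu_S1, mu_S3, ← ENNReal.ofReal_mul (by norm_num)]; norm_num)
    · exact key 2 3 (by rw [mu_S23, mu_S2, mu_S3, ← ENNReal.ofReal_mul (by norm_num)]; norm_num)
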